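/- Let n, N ∈ ℕ₊, η ∈ (0,1), δ > 0, and let γ¹, γ², …, γ^N ∈ ℝ^n be vectors with all components positive such that ‖(γ^{k+1} − γ^k)/γ^k‖ ≤ η (componentwise quotient, Euclidean norm) for every k with 1 ≤ k < N. For each coordinate i ∈ {1, …, n}, let K_i ⊆ {1, …, N} be a set containing 1 such that for every pair of consecutive elements k₁ < k₂ of K_i, the ratio γ^{k₂}_i/γ^{k₁}_i lies outside the interval [1/(1+δ), 1+δ]. Then Σ_{i=1}^{n} (|K_i| − 1) ≤ η·(N−1)·√n / ((1−η)·log(1+δ)). -/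

import Mathlib

lemma tele_abs (L : ℕ → ℝ) (a b : ℕ) (h : a ≤ b) :
    |L b - L a| ≤ ∑ k ∈ Finset.Ico a b, |L (k+1) - L k| := by
  induction b, h using Nat.le_induction with
  | base => simp
  | succ b hab ih =>
    rw [Finset.sum_Ico_succ_top (by omega : a ≤ b)]
    calc |L (b+1) - L a| ≤ |L (b+1) - L b| + |L b - L a| := abs_sub_le _ _ _
    _ ≤ |L (b+1) - L b| + ∑ k ∈ Finset.Ico a b, |L (k+1) - L k| := by linarith
    _ = _ := by ring

lemma counting (L : ℕ → ℝ) (c : ℝ) (hc : 0 ≤ c) (b : ℕ) (S : Finset ℕ) :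
    ∀ a, S ⊆ Finset.Icc a b →
      (∀ k₁ ∈ S, ∀ k₂ ∈ S, k₁ < k₂ → (∀ k ∈ S, ¬(k₁ < k ∧ k < k₂)) → c ≤ |L k₂ - L k₁|) →
      ((S.card : ℝ) - 1) * c ≤ ∑ k ∈ Finset.Ico a b, |L (k+1) - L k| := by
  induction S using Finset.strongInduction with
  | _ S ih =>
    intro a hsub hcons
    rcases le_or_gt S.card 1 with h1 | h2
    · have : ((S.card : ℝ) - 1) * c ≤ 0 := by
        apply mul_nonpos_of_nonpos_of_nonneg _ hc
        have : (S.card : ℝ) ≤ 1 := by exact_mod_cast h1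
        linarith
      exact this.trans (Finset.sum_nonneg fun k _ => abs_nonneg _)
    · have hne : S.Nonempty := Finset.card_pos.mp (by omega)
      set m := S.min' hne with hm
      have hmS : m ∈ S := S.min'_mem hne
      set S' := S.erase m with hS'
      have hS'sub : S' ⊂ S := Finset.erase_ssubset hmS
      have hcard' : S'.card = S.card - 1 := Finset.card_erase_of_mem hmS
      have hne' : S'.Nonempty := Finset.card_pos.mp (by omega)
      set m' := S'.min' hne' with hm'
      have hm'S' : m' ∈ S' := S'.min'_mem hne'
      have hm'S : m' ∈ S := Finset.mem_of_mem_erase hm'S'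
      have hmm' : m < m' := by
        have h1 : m ≤ m' := S.min'_le _ hm'S
        have h2 : m' ≠ m := Finset.ne_of_mem_erase hm'S'
        omega
      have hconsec : ∀ k ∈ S, ¬(m < k ∧ k < m') := by
        intro k hk ⟨hk1, hk2⟩
        have : k ∈ S' := Finset.mem_erase.mpr ⟨by omega, hk⟩
        have := S'.min'_le _ this
        omega
      have hstep : c ≤ |L m' - L m| := hcons m hmS m' hm'S hmm' hconsec
      have hmab : a ≤ m ∧ m ≤ b := Finset.mem_Icc.mp (hsub hmS)
      have hm'ab : a ≤ m' ∧ m' ≤ b := Finset.mem_Icc.mp (hsub hm'S)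
      have hsub' : S' ⊆ Finset.Icc m' b := by
        intro k hk
        have hkS : k ∈ S := Finset.mem_of_mem_erase hk
        have := (Finset.mem_Icc.mp (hsub hkS)).2
        exact Finset.mem_Icc.mpr ⟨S'.min'_le _ hk, this⟩
      have hcons' : ∀ k₁ ∈ S', ∀ k₂ ∈ S', k₁ < k₂ → (∀ k ∈ S', ¬(k₁ < k ∧ k < k₂)) →
          c ≤ |L k₂ - L k₁| := by
        intro k₁ hk₁ k₂ hk₂ hlt hbet
        refine hcons k₁ (Finset.mem_of_mem_erase hk₁) k₂ (Finset.mem_of_mem_erase hk₂) hlt ?_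
        intro k hk ⟨h1, h2⟩
        have hk1m' : m' ≤ k₁ := S'.min'_le _ hk₁
        have : k ∈ S' := Finset.mem_erase.mpr ⟨by omega, hk⟩
        exact hbet k this ⟨h1, h2⟩
      have IH := ih S' hS'sub m' hsub' hcons'
      have htel : |L m' - L m| ≤ ∑ k ∈ Finset.Ico m m', |L (k+1) - L k| :=
        tele_abs L m m' hmm'.le
      have hsplit : ∑ k ∈ Finset.Ico m m', |L (k+1) - L k|
          + ∑ k ∈ Finset.Ico m' b, |L (k+1) - L k|
          = ∑ k ∈ Finset.Ico m b, |L (k+1) - L k| :=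
        Finset.sum_Ico_consecutive _ hmm'.le hm'ab.2
      have hmono : ∑ k ∈ Finset.Ico m b, |L (k+1) - L k|
          ≤ ∑ k ∈ Finset.Ico a b, |L (k+1) - L k| := by
        apply Finset.sum_le_sum_of_subset_of_nonneg
        · apply Finset.Ico_subset_Ico hmab.1 le_rfl
        · intro k _ _; exact abs_nonneg _
      have hcardeq : (S.card : ℝ) - 1 = ((S'.card : ℝ) - 1) + 1 := by
        rw [hcard']
        have : (1:ℕ) ≤ S.card := by omega
        push_cast [Nat.cast_sub this]
        ring
      calc ((S.card : ℝ) - 1) * c = ((S'.card : ℝ) - 1) * c + c := by rw [hcardeq]; ring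
      _ ≤ ∑ k ∈ Finset.Ico m' b, |L (k+1) - L k| + |L m' - L m| := by linarith
      _ ≤ ∑ k ∈ Finset.Ico m' b, |L (k+1) - L k|
          + ∑ k ∈ Finset.Ico m m', |L (k+1) - L k| := by linarith
      _ = ∑ k ∈ Finset.Ico m b, |L (k+1) - L k| := by linarith
      _ ≤ _ := hmono

lemma log_one_add_abs_le (x η : ℝ) (hη1 : η < 1) (hx : |x| ≤ η) :
    |Real.log (1 + x)| ≤ |x| / (1 - η) := by
  have hxb := abs_le.mp hx
  have hpos : 0 < 1 + x := by linarith
  have h1 : Real.log (1 + x) ≤ x := by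
    have := Real.log_le_sub_one_of_pos hpos
    linarith
  have h2 : -Real.log (1 + x) ≤ -x / (1 + x) := by
    have := Real.log_le_sub_one_of_pos (inv_pos.mpr hpos)
    rw [Real.log_inv] at this
    have : -Real.log (1+x) ≤ (1+x)⁻¹ - 1 := this
    have heq : (1+x)⁻¹ - 1 = -x / (1+x) := by field_simp; ring
    linarith [heq ▸ this]
  have hden : 0 < 1 - η := by linarith
  rw [abs_le]
  constructor
  · have : -x / (1 + x) ≤ |x| / (1 - η) :=
      div_le_div₀ (abs_nonneg x) (neg_le_abs x) hden (by linarith)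
    linarith
  · have : x ≤ |x| / (1 - η) := by
      calc x ≤ |x| := le_abs_self x
      _ ≤ |x| / (1 - η) := by
        rw [le_div_iff₀ hden]
        nlinarith [abs_nonneg x]
    linarith

/-- aggregated counting bound over all coordinates: the total number of lazy
refreshes is at most `η(N−1)√n / ((1−η)log(1+δ))`. -/
theorem aggregated_counting_bound (n N : ℕ) (hn : 0 < n) (hN : 0 < N)
    (η δ : ℝ) (hη : η ∈ Set.Ioo (0:ℝ) 1) (hδ : 0 < δ)
    (γ : ℕ → Fin n → ℝ)
    (hpos : ∀ k, 1 ≤ k → k ≤ N → ∀ i, 0 < γ k i)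
    (hstep : ∀ k, 1 ≤ k → k < N →
      Real.sqrt (∑ i, ((γ (k + 1) i - γ k i) / γ k i) ^ 2) ≤ η)
    (K : Fin n → Finset ℕ)
    (hKsub : ∀ i, K i ⊆ Finset.Icc 1 N)
    (hone : ∀ i, 1 ∈ K i)
    (hcons : ∀ i, ∀ k₁ ∈ K i, ∀ k₂ ∈ K i, k₁ < k₂ → (∀ k ∈ K i, ¬(k₁ < k ∧ k < k₂)) →
      γ k₂ i / γ k₁ i ∉ Set.Icc (1 / (1 + δ)) (1 + δ)) :
    ∑ i, (((K i).card : ℝ) - 1)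
      ≤ η * ((N : ℝ) - 1) * Real.sqrt n / ((1 - η) * Real.log (1 + δ)) := by
  obtain ⟨hη0, hη1⟩ := hη
  set c := Real.log (1 + δ) with hc
  have hcpos : 0 < c := Real.log_pos (by linarith)
  have h1η : 0 < 1 - η := by linarith
  set L : Fin n → ℕ → ℝ := fun i k => Real.log (γ k i) with hL
  -- per-coordinate counting bound
  have key : ∀ i, (((K i).card : ℝ) - 1) * c
      ≤ ∑ k ∈ Finset.Ico 1 N, |L i (k+1) - L i k| := by
    intro i
    apply counting (L i) c hcpos.le N (K i) 1 (by simpa using hKsub i)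
    intro k₁ hk₁ k₂ hk₂ hlt hbet
    have hk₁b := Finset.mem_Icc.mp (hKsub i hk₁)
    have hk₂b := Finset.mem_Icc.mp (hKsub i hk₂)
    have hp₁ : 0 < γ k₁ i := hpos k₁ hk₁b.1 hk₁b.2 i
    have hp₂ : 0 < γ k₂ i := hpos k₂ hk₂b.1 hk₂b.2 i
    have hratio := hcons i k₁ hk₁ k₂ hk₂ hlt hbet
    rw [Set.mem_Icc] at hratio
    push_neg at hratio
    have hdiff : L i k₂ - L i k₁ = Real.log (γ k₂ i / γ k₁ i) :=
      (Real.log_div hp₂.ne' hp₁.ne').symm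
    rcases lt_or_ge (γ k₂ i / γ k₁ i) (1 / (1 + δ)) with hr | hr
    · -- ratio < 1/(1+δ) : log ratio < -c
      have hrpos : 0 < γ k₂ i / γ k₁ i := div_pos hp₂ hp₁
      have : Real.log (γ k₂ i / γ k₁ i) ≤ Real.log (1 / (1 + δ)) :=
        Real.log_le_log hrpos hr.le
      rw [Real.log_div one_ne_zero (by positivity), Real.log_one] at this
      calc c ≤ -(L i k₂ - L i k₁) := by rw [hdiff]; linarith
      _ ≤ |L i k₂ - L i k₁| := neg_le_abs _
    · have hr2 : 1 + δ < γ k₂ i / γ k₁ i := hratio hr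
      have : c ≤ Real.log (γ k₂ i / γ k₁ i) :=
        Real.log_le_log (by positivity) hr2.le
      calc c ≤ L i k₂ - L i k₁ := by rw [hdiff]; exact this
      _ ≤ |L i k₂ - L i k₁| := le_abs_self _
  -- per-step aggregate bound
  have stepbd : ∀ k ∈ Finset.Ico 1 N,
      ∑ i, |L i (k+1) - L i k| ≤ η * Real.sqrt n / (1 - η) := by
    intro k hk
    obtain ⟨hk1, hkN⟩ := Finset.mem_Ico.mp hk
    set x : Fin n → ℝ := fun i => (γ (k+1) i - γ k i) / γ k i with hx
    have hs := hstep k hk1 hkN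
    have hsum_nonneg : (0:ℝ) ≤ ∑ i, x i ^ 2 := Finset.sum_nonneg fun i _ => sq_nonneg _
    have hsumsq : ∑ i, x i ^ 2 ≤ η ^ 2 := by
      have := Real.sqrt_le_sqrt (le_of_eq (rfl : ∑ i, x i ^ 2 = ∑ i, x i ^ 2))
      nlinarith [Real.sq_sqrt hsum_nonneg, Real.sqrt_nonneg (∑ i, x i ^ 2)]
    have hxi : ∀ i, |x i| ≤ η := by
      intro i
      have h1 : x i ^ 2 ≤ η ^ 2 := by
        have : x i ^ 2 ≤ ∑ j, x j ^ 2 :=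
          Finset.single_le_sum (fun j _ => sq_nonneg (x j)) (Finset.mem_univ i)
        linarith
      calc |x i| = Real.sqrt (x i ^ 2) := (Real.sqrt_sq_eq_abs _).symm
      _ ≤ Real.sqrt (η ^ 2) := Real.sqrt_le_sqrt h1
      _ = η := Real.sqrt_sq hη0.le
    have hLdiff : ∀ i, L i (k+1) - L i k = Real.log (1 + x i) := by
      intro i
      have hpk : 0 < γ k i := hpos k hk1 (by omega) i
      have hpk1 : 0 < γ (k+1) i := hpos (k+1) (by omega) (by omega) i
      have h1x : 1 + x i = γ (k+1) i / γ k i := by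
        field_simp [hx]
        simp only [hx]
        rw [add_mul, div_mul_cancel₀ _ hpk.ne']
        ring
      rw [hL]
      simp only []
      rw [← Real.log_div hpk1.ne' hpk.ne', ← h1x]
    have habs : ∀ i, |L i (k+1) - L i k| ≤ |x i| / (1 - η) := by
      intro i
      rw [hLdiff i]
      exact log_one_add_abs_le (x i) η hη1 (hxi i)
    have hCS : ∑ i, |x i| ≤ Real.sqrt n * η := by
      have hsq : (∑ i, |x i|) ^ 2 ≤ (n : ℝ) * ∑ i, x i ^ 2 := by
        have := sq_sum_le_card_mul_sum_sq (s := Finset.univ) (f := fun i : Fin n => |x i|)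
        simpa [sq_abs] using this
      have hnonneg : (0:ℝ) ≤ ∑ i, |x i| := Finset.sum_nonneg fun i _ => abs_nonneg _
      have h2 : (∑ i, |x i|) ^ 2 ≤ (Real.sqrt n * η) ^ 2 := by
        have : (n : ℝ) * ∑ i, x i ^ 2 ≤ (n : ℝ) * η ^ 2 := by
          apply mul_le_mul_of_nonneg_left hsumsq (Nat.cast_nonneg n)
        calc (∑ i, |x i|) ^ 2 ≤ (n : ℝ) * ∑ i, x i ^ 2 := hsq
        _ ≤ (n : ℝ) * η ^ 2 := this
        _ = (Real.sqrt n * η) ^ 2 := by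
          rw [mul_pow, Real.sq_sqrt (Nat.cast_nonneg n)]
      have hrhs : (0:ℝ) ≤ Real.sqrt n * η := by positivity
      nlinarith
    calc ∑ i, |L i (k+1) - L i k| ≤ ∑ i, |x i| / (1 - η) :=
      Finset.sum_le_sum fun i _ => habs i
    _ = (∑ i, |x i|) / (1 - η) := by rw [Finset.sum_div]
    _ ≤ Real.sqrt n * η / (1 - η) := by gcongr
    _ = η * Real.sqrt n / (1 - η) := by ring
  -- combine
  have total : (∑ i, (((K i).card : ℝ) - 1)) * c
      ≤ η * ((N:ℝ) - 1) * Real.sqrt n / (1 - η) := by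
    calc (∑ i, (((K i).card : ℝ) - 1)) * c = ∑ i, (((K i).card : ℝ) - 1) * c := Finset.sum_mul _ _ _
    _ ≤ ∑ i, ∑ k ∈ Finset.Ico 1 N, |L i (k+1) - L i k| :=
      Finset.sum_le_sum fun i _ => key i
    _ = ∑ k ∈ Finset.Ico 1 N, ∑ i, |L i (k+1) - L i k| := Finset.sum_comm
    _ ≤ ∑ k ∈ Finset.Ico 1 N, η * Real.sqrt n / (1 - η) :=
      Finset.sum_le_sum stepbd
    _ = ((N:ℝ) - 1) * (η * Real.sqrt n / (1 - η)) := by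
      rw [Finset.sum_const, Nat.card_Ico]
      have : ((N - 1 : ℕ) : ℝ) = (N:ℝ) - 1 := by
        push_cast [Nat.cast_sub hN]
        ring
      rw [nsmul_eq_mul, this]
    _ = η * ((N:ℝ) - 1) * Real.sqrt n / (1 - η) := by ring
  have total2 := (le_div_iff₀ h1η).mp total
  rw [le_div_iff₀ (by positivity : (0:ℝ) < (1 - η) * c)]
  nlinarith [total2]
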